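/- For every integer r ≥ 1, let g_r = p^A(2|…|2|1 / 2r+1) be the Frobenius type-A seaweed whose top composition consists of r parts equal to 2 followed by a 1, and whose bottom composition is the single part 2r+1. Then there exist positive integers a_r > b_r such that the spectrum of g_r is the multiset in which −1 occurs with multiplicity b_r, 0 occurs with multiplicity a_r, 1 occurs with multiplicity a_r, and 2 occurs with multiplicity b_r. In particular, g_r has the log-concave spectrum property. -/

import Mathlib

namespace Seaweed

/-- Positions `i` and `j` (1-indexed) are joined by an arc of the composition `c`:
they lie in the same block of `c` and are placed symmetrically within it. -/
def blockPair (c : List ℕ) (i j : ℕ) : Prop :=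
  ∃ k, k < c.length ∧ (c.take k).sum < i ∧ (c.take k).sum < j ∧
    i + j = 2 * (c.take k).sum + c.getD k 0 + 1 ∧ i ≠ j

lemma blockPair_symm {c : List ℕ} {i j : ℕ} (h : blockPair c i j) : blockPair c j i := by
  obtain ⟨k, hk, hi, hj, hsum, hne⟩ := h
  exact ⟨k, hk, hj, hi, by omega, hne.symm⟩

/-- The meander `M(a|b)` of the pair of compositions `(a, b)`, as a simple graph on `ℕ`
(positions `1, …, a.sum` carry the meander; all other naturals are isolated).
Top edges come from `a`, bottom edges from `b`. -/
def meander (a b : List ℕ) : SimpleGraph ℕ where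
  Adj i j := blockPair a i j ∨ blockPair b i j
  symm := ⟨fun _ _ h => h.imp blockPair_symm blockPair_symm⟩
  loopless := ⟨by
    rintro i (⟨k, _, _, _, _, hne⟩ | ⟨k, _, _, _, _, hne⟩) <;> exact hne rfl⟩

/-- The directed-edge relation of the oriented meander: top edges are oriented
right-to-left, bottom edges left-to-right. -/
def dirEdge (a b : List ℕ) (x y : ℕ) : Prop :=
  (blockPair a x y ∧ y < x) ∨ (blockPair b x y ∧ x < y)

open scoped Classical in
/-- The weight of a walk in the oriented meander: each step taken in agreement with
the orientation counts `+1`, each step against it counts `-1`. -/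
noncomputable def walkWeight (a b : List ℕ) {i j : ℕ} (w : (meander a b).Walk i j) : ℤ :=
  (w.darts.map fun d => if dirEdge a b d.toProd.1 d.toProd.2 then (1 : ℤ) else -1).sum

open scoped Classical in
/-- `w(P_{i,j}(a|b))`: the weight of the (unique, when the meander consists of a single
path) path from `v_i` to `v_j` in the oriented meander. -/
noncomputable def pathWeight (a b : List ℕ) (i j : ℕ) : ℤ :=
  if h : ∃ p : (meander a b).Walk i j, p.IsPath then walkWeight a b h.choose else 0

/-- The meander of `(a, b)` consists of a single path: it has no cycles (in particular no
doubled top/bottom edge, which would be a 2-cycle) and all positions `1, …, n` are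
connected.  This is exactly the condition for `p^A(a|b)` to be Frobenius. -/
def IsSinglePath (a b : List ℕ) : Prop :=
  (meander a b).IsAcyclic ∧
  (∀ i j, i ∈ Finset.Icc 1 a.sum → j ∈ Finset.Icc 1 a.sum → (meander a b).Reachable i j) ∧
  ∀ i j, ¬(blockPair a i j ∧ blockPair b i j)

/-- `i` and `j` lie in the same block of the composition `c`. -/
def sameBlock (c : List ℕ) (i j : ℕ) : Prop :=
  ∃ k, k < c.length ∧ (c.take k).sum < i ∧ i ≤ (c.take k).sum + c.getD k 0 ∧
    (c.take k).sum < j ∧ j ≤ (c.take k).sum + c.getD k 0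

/-- The matrix position `(i, j)` belongs to the seaweed `p^A(a|b)`. -/
def seaweedPos (a b : List ℕ) (i j : ℕ) : Prop :=
  (j ≤ i ∧ sameBlock a i j) ∨ (i ≤ j ∧ sameBlock b i j)

open scoped Classical in
/-- The block of the spectrum matrix of `p^A(a|b)` on rows `R` and columns `C`:
the multiset of weights `w(P_{i,j})` over positions `(i,j)` of the seaweed with
`i ∈ R`, `j ∈ C`. -/
noncomputable def spectrumBlock (a b : List ℕ) (R C : Finset ℕ) : Multiset ℤ :=
  ((R ×ˢ C).filter fun p => seaweedPos a b p.1 p.2).val.map fun p => pathWeight a b p.1 p.2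

/-- The multiset of all values of the extended spectrum matrix of `p^A(a|b)`:
the weights `w(P_{i,j})` over all pairs `1 ≤ i, j ≤ n`. -/
noncomputable def extendedValues (a b : List ℕ) : Multiset ℤ :=
  (Finset.Icc 1 a.sum ×ˢ Finset.Icc 1 a.sum).val.map fun p => pathWeight a b p.1 p.2

/-- The spectrum of a Frobenius type-A seaweed `p^A(a|b)`: the multiset of entries of
its spectrum matrix, with one copy of `0` removed. -/
noncomputable def spectrum (a b : List ℕ) : Multiset ℤ :=
  spectrumBlock a b (Finset.Icc 1 a.sum) (Finset.Icc 1 a.sum) - {0}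

/-- The extended spectrum: all entries of the extended spectrum matrix, with one copy
of `0` removed. -/
noncomputable def extendedSpectrum (a b : List ℕ) : Multiset ℤ :=
  extendedValues a b - {0}

/-- Listing the distinct values of the multiset `S` in increasing order, the
corresponding sequence of multiplicities is log-concave. -/
def HasLogConcaveSpectrum (S : Multiset ℤ) : Prop :=
  ∀ i : ℕ, 0 < i → i + 1 < (S.toFinset.sort (· ≤ ·)).length →
    S.count ((S.toFinset.sort (· ≤ ·)).getD (i - 1) 0) *
      S.count ((S.toFinset.sort (· ≤ ·)).getD (i + 1) 0) ≤
      S.count ((S.toFinset.sort (· ≤ ·)).getD i 0) ^ 2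


set_option maxHeartbeats 1600000

section AuxAll
open Finset

section Aux
open Finset

private lemma take_sum (r k : ℕ) (h : k ≤ r) :
    (List.take k (List.replicate r 2 ++ [1])).sum = 2*k := by
  rw [List.take_append, List.take_replicate, min_eq_left h,
    List.length_replicate, Nat.sub_eq_zero_of_le h, List.take_zero, List.append_nil,
    List.sum_replicate, smul_eq_mul, Nat.mul_comm]

private lemma getD_lt (r k : ℕ) (h : k < r) : (List.replicate r 2 ++ [1]).getD k 0 = 2 := by
  rw [List.getD_append _ _ _ _ (by simpa using h)]
  simp [List.getD, h]

private lemma getD_eq (r : ℕ) : (List.replicate r 2 ++ [1]).getD r 0 = 1 := by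
  rw [List.getD_append_right (List.replicate r 2) [1] 0 r (by simp)]
  simp

private lemma asum (r : ℕ) : (List.replicate r 2 ++ [1]).sum = 2*r+1 := by
  simp [List.sum_replicate, Nat.mul_comm]

private lemma len_a (r : ℕ) : (List.replicate r 2 ++ [1]).length = r + 1 := by simp

private lemma bpA_iff (r i j : ℕ) :
    blockPair (List.replicate r 2 ++ [1]) i j ↔
      ∃ k, k < r ∧ ((i = 2*k+1 ∧ j = 2*k+2) ∨ (i = 2*k+2 ∧ j = 2*k+1)) := by
  constructor
  · rintro ⟨k, hk, hi, hj, hsum, hne⟩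
    rw [len_a] at hk
    rcases Nat.lt_or_ge k r with h | h
    · rw [take_sum r k (le_of_lt h)] at hi hj hsum
      rw [getD_lt r k h] at hsum
      exact ⟨k, h, by omega⟩
    · have hkr : k = r := by omega
      rw [hkr, take_sum r r le_rfl] at hi hj
      rw [hkr, take_sum r r le_rfl, getD_eq r] at hsum
      omega
  · rintro ⟨k, hk, h⟩
    refine ⟨k, by rw [len_a]; omega, ?_⟩
    rw [take_sum r k (le_of_lt hk), getD_lt r k hk]
    omega

private lemma bpB_iff (r i j : ℕ) :
    blockPair [2*r+1] i j ↔ 0 < i ∧ 0 < j ∧ i + j = 2*r+2 ∧ i ≠ j := by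
  constructor
  · rintro ⟨k, hk, hi, hj, hsum, hne⟩
    simp only [List.length_singleton] at hk
    interval_cases k
    simp only [List.take_zero, List.sum_nil] at hi hj hsum
    have : ([2*r+1] : List ℕ).getD 0 0 = 2*r+1 := rfl
    rw [this] at hsum
    exact ⟨hi, hj, by omega, hne⟩
  · rintro ⟨hi, hj, hsum, hne⟩
    refine ⟨0, by simp, by simpa using hi, by simpa using hj, ?_, hne⟩
    have : ([2*r+1] : List ℕ).getD 0 0 = 2*r+1 := rfl
    rw [this]
    simpa using by omega

end Aux


section Aux2
open Finset SimpleGraph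

/-- potential function -/
private def ph (r v : ℕ) : ℤ :=
  (if v % 2 = 0 then -1 else 0) + (if r + r % 2 < v then 1 else 0)

private lemma step_dir (r x y : ℕ) (h : dirEdge (List.replicate r 2 ++ [1]) [2*r+1] x y) :
    ph r y = ph r x + 1 := by
  rcases h with ⟨hA, hlt⟩ | ⟨hB, hlt⟩
  · rw [bpA_iff] at hA
    obtain ⟨k, hk, hc⟩ := hA
    unfold ph
    split_ifs <;> omega
  · rw [bpB_iff] at hB
    obtain ⟨hx, hy, hsum, hne⟩ := hB
    unfold ph
    split_ifs <;> omega

private lemma step_rev (r x y : ℕ)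
    (hadj : (meander (List.replicate r 2 ++ [1]) [2*r+1]).Adj x y)
    (h : ¬ dirEdge (List.replicate r 2 ++ [1]) [2*r+1] x y) :
    ph r y = ph r x - 1 := by
  have hd : dirEdge (List.replicate r 2 ++ [1]) [2*r+1] y x := by
    rcases hadj with hA | hB
    · rcases Nat.lt_or_ge x y with hxy | hxy
      · exact Or.inl ⟨blockPair_symm hA, hxy⟩
      · have hne : x ≠ y := by
          rw [bpA_iff] at hA; obtain ⟨k, _, hc⟩ := hA; omega
        exact absurd (Or.inl ⟨hA, by omega⟩) h
    · rcases Nat.lt_or_ge y x with hxy | hxy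
      · exact Or.inr ⟨blockPair_symm hB, hxy⟩
      · have hne : x ≠ y := by rw [bpB_iff] at hB; tauto
        exact absurd (Or.inr ⟨hB, by omega⟩) h
  have := step_dir r y x hd
  omega

private lemma walk_weight (r : ℕ) {i j : ℕ}
    (w : (meander (List.replicate r 2 ++ [1]) [2*r+1]).Walk i j) :
    walkWeight (List.replicate r 2 ++ [1]) [2*r+1] w = ph r j - ph r i := by
  induction w with
  | nil => simp [walkWeight]
  | @cons u v _ hadj p ih =>
    rw [walkWeight] at ih ⊢
    rw [SimpleGraph.Walk.darts_cons, List.map_cons, List.sum_cons, ih]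
    by_cases hd : dirEdge (List.replicate r 2 ++ [1]) [2*r+1] u v
    · rw [if_pos hd]
      have := step_dir r u v hd
      omega
    · rw [if_neg hd]
      have := step_rev r u v hadj hd
      omega

end Aux2


section Aux3
open Finset SimpleGraph

private def mu (r v : ℕ) : ℕ :=
  if v = 2*r+1 then 1
  else if v ≤ r + r % 2 then 2*v - 2 - ((v+1) % 2)
  else 4*r + 1 + ((v+1) % 2) - 2*v

/-- every vertex other than 1 has a neighbour with smaller `mu` -/
private lemma mu_step (r : ℕ) (hr : 1 ≤ r) (v : ℕ) (h2 : 2 ≤ v) (hn : v ≤ 2*r+1) :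
    ∃ u, 1 ≤ u ∧ u ≤ 2*r+1 ∧ (meander (List.replicate r 2 ++ [1]) [2*r+1]).Adj v u ∧
      mu r u < mu r v := by
  by_cases hv : v = 2*r+1
  · refine ⟨1, le_refl 1, by omega, Or.inr ?_, ?_⟩
    · rw [bpB_iff]; omega
    · unfold mu; split_ifs <;> omega
  · by_cases hsm : v ≤ r + r % 2
    · rcases Nat.even_or_odd v with he | ho
      · -- v even small: u = v - 1 via top edge k = v/2 - 1
        have hev : v % 2 = 0 := Nat.even_iff.mp he
        refine ⟨v - 1, by omega, by omega, Or.inl ?_, ?_⟩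
        · rw [bpA_iff]
          exact ⟨v/2 - 1, by omega, Or.inr (by omega)⟩
        · unfold mu; split_ifs <;> omega
      · -- v odd small (v ≥ 3): u = 2r+2-v via bottom edge
        have hov : v % 2 = 1 := Nat.odd_iff.mp ho
        refine ⟨2*r+2-v, by omega, by omega, Or.inr ?_, ?_⟩
        · rw [bpB_iff]; omega
        · unfold mu; split_ifs <;> omega
    · rcases Nat.even_or_odd v with he | ho
      · -- v even large: u = 2r+2-v via bottom
        have hev : v % 2 = 0 := Nat.even_iff.mp he
        refine ⟨2*r+2-v, by omega, by omega, Or.inr ?_, ?_⟩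
        · rw [bpB_iff]; omega
        · unfold mu; split_ifs <;> omega
      · -- v odd large, v < 2r+1: u = v+1 via top edge k = (v-1)/2
        have hov : v % 2 = 1 := Nat.odd_iff.mp ho
        refine ⟨v + 1, by omega, by omega, Or.inl ?_, ?_⟩
        · rw [bpA_iff]
          exact ⟨(v-1)/2, by omega, Or.inl (by omega)⟩
        · unfold mu; split_ifs <;> omega

private lemma reach_one (r : ℕ) (hr : 1 ≤ r) (v : ℕ) (h1 : 1 ≤ v) (hn : v ≤ 2*r+1) :
    (meander (List.replicate r 2 ++ [1]) [2*r+1]).Reachable 1 v := by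
  have key : ∀ N v, mu r v ≤ N → 1 ≤ v → v ≤ 2*r+1 →
      (meander (List.replicate r 2 ++ [1]) [2*r+1]).Reachable 1 v := by
    intro N
    induction N with
    | zero =>
      intro v hm h1 hn
      by_cases hv : v = 1
      · subst hv; exact Reachable.refl 1
      · obtain ⟨u, _, _, _, hmu⟩ := mu_step r hr v (by omega) hn
        omega
    | succ N ih =>
      intro v hm h1 hn
      by_cases hv : v = 1
      · subst hv; exact Reachable.refl 1
      · obtain ⟨u, hu1, hun, hadj, hmu⟩ := mu_step r hr v (by omega) hn
        exact (ih u (by omega) hu1 hun).trans hadj.symm.reachable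
  exact key (mu r v) v le_rfl h1 hn

private lemma pathWeight_eq (r : ℕ) (hr : 1 ≤ r) (i j : ℕ)
    (hi1 : 1 ≤ i) (hin : i ≤ 2*r+1) (hj1 : 1 ≤ j) (hjn : j ≤ 2*r+1) :
    pathWeight (List.replicate r 2 ++ [1]) [2*r+1] i j = ph r j - ph r i := by
  have hreach : (meander (List.replicate r 2 ++ [1]) [2*r+1]).Reachable i j :=
    ((reach_one r hr i hi1 hin).symm).trans (reach_one r hr j hj1 hjn)
  obtain ⟨w⟩ := hreach
  have hex : ∃ p : (meander (List.replicate r 2 ++ [1]) [2*r+1]).Walk i j, p.IsPath :=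
    ⟨w.bypass, w.bypass_isPath⟩
  rw [pathWeight, dif_pos hex]
  exact walk_weight r _

end Aux3


section Aux4
open Finset

private lemma sbA_iff (r i j : ℕ) :
    sameBlock (List.replicate r 2 ++ [1]) i j ↔
      ((∃ k, k < r ∧ 2*k < i ∧ i ≤ 2*k+2 ∧ 2*k < j ∧ j ≤ 2*k+2) ∨ (i = 2*r+1 ∧ j = 2*r+1)) := by
  constructor
  · rintro ⟨k, hk, hi1, hi2, hj1, hj2⟩
    rw [len_a] at hk
    rcases Nat.lt_or_ge k r with h | h
    · rw [take_sum r k (le_of_lt h)] at hi1 hj1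
      rw [take_sum r k (le_of_lt h), getD_lt r k h] at hi2 hj2
      exact Or.inl ⟨k, h, hi1, hi2, hj1, hj2⟩
    · have hkr : k = r := by omega
      rw [hkr, take_sum r r le_rfl] at hi1 hj1
      rw [hkr, take_sum r r le_rfl, getD_eq r] at hi2 hj2
      exact Or.inr (by omega)
  · rintro (⟨k, hk, h⟩ | h)
    · refine ⟨k, by rw [len_a]; omega, ?_⟩
      rw [take_sum r k (le_of_lt hk), getD_lt r k hk]
      omega
    · refine ⟨r, by rw [len_a]; omega, ?_⟩
      rw [take_sum r r le_rfl, getD_eq r]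
      omega

private lemma sbB_iff (r i j : ℕ) :
    sameBlock [2*r+1] i j ↔ (0 < i ∧ i ≤ 2*r+1 ∧ 0 < j ∧ j ≤ 2*r+1) := by
  constructor
  · rintro ⟨k, hk, hi1, hi2, hj1, hj2⟩
    simp only [List.length_singleton] at hk
    interval_cases k
    simp only [List.take_zero, List.sum_nil] at hi1 hi2 hj1 hj2
    have hg : ([2*r+1] : List ℕ).getD 0 0 = 2*r+1 := rfl
    rw [hg] at hi2 hj2
    omega
  · rintro ⟨hi1, hi2, hj1, hj2⟩
    refine ⟨0, by simp, by simpa using hi1, ?_, by simpa using hj1, ?_⟩ <;>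
    · have hg : ([2*r+1] : List ℕ).getD 0 0 = 2*r+1 := rfl
      simp only [List.take_zero, List.sum_nil, hg]
      omega

private lemma sp_iff (r i j : ℕ) (hi1 : 1 ≤ i) (hin : i ≤ 2*r+1) (hj1 : 1 ≤ j)
    (hjn : j ≤ 2*r+1) :
    seaweedPos (List.replicate r 2 ++ [1]) [2*r+1] i j ↔
      (i ≤ j ∨ (i = j+1 ∧ j % 2 = 1 ∧ i ≤ 2*r)) := by
  constructor
  · rintro (⟨hji, hsb⟩ | ⟨hij, _⟩)
    · rw [sbA_iff] at hsb
      rcases hsb with ⟨k, hk, h⟩ | h <;> omega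
    · exact Or.inl hij
  · rintro (h | h)
    · exact Or.inr ⟨h, (sbB_iff r i j).mpr (by omega)⟩
    · refine Or.inl ⟨by omega, (sbA_iff r i j).mpr (Or.inl ⟨j/2, by omega⟩)⟩

private lemma count_S0 (r : ℕ) (hr : 1 ≤ r) (v : ℤ) :
    Multiset.count v (spectrumBlock (List.replicate r 2 ++ [1]) [2*r+1]
        (Finset.Icc 1 ((List.replicate r 2 ++ [1]).sum))
        (Finset.Icc 1 ((List.replicate r 2 ++ [1]).sum))) =
      ((Finset.Icc 1 (2*r+1) ×ˢ Finset.Icc 1 (2*r+1)).filter fun p =>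
        ((p.1 ≤ p.2 ∨ (p.1 = p.2+1 ∧ p.2 % 2 = 1 ∧ p.1 ≤ 2*r)) ∧
          v = ph r p.2 - ph r p.1)).card := by
  classical
  rw [spectrumBlock, asum, Multiset.count_map]
  rw [← Finset.filter_val, Finset.filter_filter]
  rw [show ((Finset.Icc 1 (2*r+1) ×ˢ Finset.Icc 1 (2*r+1)).filter fun p =>
      seaweedPos (List.replicate r 2 ++ [1]) [2*r+1] p.1 p.2 ∧
        v = pathWeight (List.replicate r 2 ++ [1]) [2*r+1] p.1 p.2) =
      ((Finset.Icc 1 (2*r+1) ×ˢ Finset.Icc 1 (2*r+1)).filter fun p =>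
        ((p.1 ≤ p.2 ∨ (p.1 = p.2+1 ∧ p.2 % 2 = 1 ∧ p.1 ≤ 2*r)) ∧
          v = ph r p.2 - ph r p.1)) from ?_]
  · rfl
  · apply Finset.filter_congr
    intro p hp
    simp only [Finset.mem_product, Finset.mem_Icc] at hp
    rw [sp_iff r p.1 p.2 hp.1.1 hp.1.2 hp.2.1 hp.2.2,
      pathWeight_eq r hr p.1 p.2 hp.1.1 hp.1.2 hp.2.1 hp.2.2]

end Aux4

section Aux5
open Finset

lemma card_or {s : Finset (ℕ×ℕ)} {P Q : ℕ×ℕ → Prop} [DecidablePred P] [DecidablePred Q]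
    (h : ∀ x ∈ s, ¬(P x ∧ Q x)) :
    (s.filter fun x => P x ∨ Q x).card = (s.filter P).card + (s.filter Q).card := by
  rw [Finset.filter_or]
  exact Finset.card_union_of_disjoint (Finset.disjoint_filter.mpr (fun x hx hp hq => h x hx ⟨hp, hq⟩))

def triF (m : ℕ) : Finset (ℕ × ℕ) :=
  (Finset.Icc 1 m ×ˢ Finset.Icc 1 m).filter fun p => p.1 < p.2

def alga (r : ℕ) : ℕ := ((r+1)/2) * (r/2+1)

lemma tri_id (r : ℕ) (hr : 1 ≤ r) :
    (triF ((r+1)/2)).card + (triF (r/2)).card + r = alga r := by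
  have h1 : (Finset.Icc 1 ((r+1)/2) ×ˢ Finset.Icc 1 (r/2)).card = ((r+1)/2) * (r/2) := by
    rw [Finset.card_product, Nat.card_Icc, Nat.card_Icc]
    simp
  have h2 : (Finset.Icc 1 ((r+1)/2) ×ˢ Finset.Icc 1 (r/2)) =
      (Finset.Icc 1 ((r+1)/2) ×ˢ Finset.Icc 1 (r/2)).filter
        (fun p => p.2 < p.1 ∨ (p.1 < p.2 ∨ p.1 = p.2)) := by
    rw [Finset.filter_true_of_mem]
    intro p _; omega
  have h3 : ((Finset.Icc 1 ((r+1)/2) ×ˢ Finset.Icc 1 (r/2)).filter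
      (fun p => p.2 < p.1 ∨ (p.1 < p.2 ∨ p.1 = p.2))).card =
      ((Finset.Icc 1 ((r+1)/2) ×ˢ Finset.Icc 1 (r/2)).filter (fun p => p.2 < p.1)).card +
      (((Finset.Icc 1 ((r+1)/2) ×ˢ Finset.Icc 1 (r/2)).filter (fun p => p.1 < p.2)).card +
       ((Finset.Icc 1 ((r+1)/2) ×ˢ Finset.Icc 1 (r/2)).filter (fun p => p.1 = p.2)).card) := by
    rw [card_or (by intro x _; omega), card_or (by intro x _; omega)]
  have hA : ((Finset.Icc 1 ((r+1)/2) ×ˢ Finset.Icc 1 (r/2)).filter (fun p => p.2 < p.1)).card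
      = (triF ((r+1)/2)).card := by
    apply Finset.card_nbij' (fun p => (p.2, p.1)) (fun p => (p.2, p.1))
    · intro p hp
      simp only [Finset.mem_coe, triF, Finset.mem_filter, Finset.mem_product, Finset.mem_Icc] at hp ⊢
      omega
    · intro p hp
      simp only [Finset.mem_coe, triF, Finset.mem_filter, Finset.mem_product, Finset.mem_Icc] at hp ⊢
      omega
    · intro p _; rfl
    · intro p _; rfl
  have hB : ((Finset.Icc 1 ((r+1)/2) ×ˢ Finset.Icc 1 (r/2)).filter (fun p => p.1 < p.2)).card
      = (triF (r/2)).card := by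
    apply Finset.card_nbij' (fun p => p) (fun p => p)
    · intro p hp
      simp only [Finset.mem_coe, triF, Finset.mem_filter, Finset.mem_product, Finset.mem_Icc] at hp ⊢
      omega
    · intro p hp
      simp only [Finset.mem_coe, triF, Finset.mem_filter, Finset.mem_product, Finset.mem_Icc] at hp ⊢
      omega
    · intro p _; rfl
    · intro p _; rfl
  have hC : ((Finset.Icc 1 ((r+1)/2) ×ˢ Finset.Icc 1 (r/2)).filter (fun p => p.1 = p.2)).card
      = r/2 := by
    have h4 : ((Finset.Icc 1 ((r+1)/2) ×ˢ Finset.Icc 1 (r/2)).filter (fun p => p.1 = p.2)).card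
        = (Finset.Icc 1 (r/2)).card := by
      apply Finset.card_nbij' (fun p => p.1) (fun x => (x, x))
      · intro p hp
        simp only [Finset.mem_coe, Finset.mem_filter, Finset.mem_product, Finset.mem_Icc] at hp ⊢
        omega
      · intro x hx
        simp only [Finset.mem_coe, Finset.mem_Icc] at hx
        simp only [Finset.mem_coe, Finset.mem_filter, Finset.mem_product, Finset.mem_Icc]
        refine ⟨⟨⟨hx.1, ?_⟩, hx.1, hx.2⟩, trivial⟩
        omega
      · intro p hp
        obtain ⟨x, y⟩ := p
        simp only [Finset.mem_coe, Finset.mem_filter, Finset.mem_product, Finset.mem_Icc] at hp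
        have hxy : x = y := hp.2
        subst hxy
        rfl
      · intro x _; rfl
    rw [h4, Nat.card_Icc]
    omega
  have hkey : ((r+1)/2) * (r/2) = (triF ((r+1)/2)).card + (triF (r/2)).card + (r/2) := by
    have e := congrArg Finset.card h2
    rw [h1, h3, hA, hB, hC] at e
    omega
  have hms : alga r = ((r+1)/2) * (r/2) + ((r+1)/2) := Nat.mul_succ _ _
  rw [hms, hkey]
  omega

end Aux5

open Finset

lemma cardV2 (r : ℕ) (hr : 1 ≤ r) :
    (((Finset.Icc 1 (2*r+1)) ×ˢ (Finset.Icc 1 (2*r+1))).filter fun p =>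
      ((p.1 ≤ p.2 ∨ (p.1 = p.2+1 ∧ p.2 % 2 = 1 ∧ p.1 ≤ 2*r)) ∧
        (2:ℤ) = ph r p.2 - ph r p.1)).card = alga r := by
  have e1 : (((Finset.Icc 1 (2*r+1)) ×ˢ (Finset.Icc 1 (2*r+1))).filter fun p =>
      ((p.1 ≤ p.2 ∨ (p.1 = p.2+1 ∧ p.2 % 2 = 1 ∧ p.1 ≤ 2*r)) ∧
        (2:ℤ) = ph r p.2 - ph r p.1)) =
      (((Finset.Icc 1 (2*r+1)) ×ˢ (Finset.Icc 1 (2*r+1))).filter fun p =>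
      (p.1 % 2 = 0 ∧ p.1 ≤ r + r % 2 ∧ p.2 % 2 = 1 ∧ r + r % 2 < p.2)) := by
    apply Finset.filter_congr
    intro p hp
    simp only [Finset.mem_coe, Finset.mem_product, Finset.mem_Icc] at hp
    unfold ph
    split_ifs <;> omega
  rw [e1]
  have e2 : (((Finset.Icc 1 (2*r+1)) ×ˢ (Finset.Icc 1 (2*r+1))).filter fun p =>
      (p.1 % 2 = 0 ∧ p.1 ≤ r + r % 2 ∧ p.2 % 2 = 1 ∧ r + r % 2 < p.2)).card
      = (Finset.Icc 1 ((r+1)/2) ×ˢ Finset.Icc 1 (r/2+1)).card := by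
    apply Finset.card_nbij' (fun p => (p.1/2, (2*r+3-p.2)/2)) (fun q => (2*q.1, 2*r+3-2*q.2))
    · intro p hp
      simp only [Finset.mem_coe, Finset.mem_filter, Finset.mem_product, Finset.mem_Icc] at hp ⊢
      omega
    · intro q hq
      simp only [Finset.mem_coe, Finset.mem_filter, Finset.mem_product, Finset.mem_Icc] at hq ⊢
      omega
    · intro p hp
      simp only [Finset.mem_coe, Finset.mem_filter, Finset.mem_product, Finset.mem_Icc] at hp
      rw [Prod.ext_iff]
      dsimp only
      omega
    · intro q hq
      simp only [Finset.mem_coe, Finset.mem_product, Finset.mem_Icc] at hq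
      rw [Prod.ext_iff]
      dsimp only
      omega
  rw [e2, Finset.card_product, Nat.card_Icc, Nat.card_Icc, alga]
  simp

open Finset

lemma cardVm1 (r : ℕ) (hr : 1 ≤ r) :
    (((Finset.Icc 1 (2*r+1)) ×ˢ (Finset.Icc 1 (2*r+1))).filter fun p =>
      ((p.1 ≤ p.2 ∨ (p.1 = p.2+1 ∧ p.2 % 2 = 1 ∧ p.1 ≤ 2*r)) ∧
        (-1:ℤ) = ph r p.2 - ph r p.1)).card = alga r := by
  have e1 : (((Finset.Icc 1 (2*r+1)) ×ˢ (Finset.Icc 1 (2*r+1))).filter fun p =>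
      ((p.1 ≤ p.2 ∨ (p.1 = p.2+1 ∧ p.2 % 2 = 1 ∧ p.1 ≤ 2*r)) ∧
        (-1:ℤ) = ph r p.2 - ph r p.1)) =
      (((Finset.Icc 1 (2*r+1)) ×ˢ (Finset.Icc 1 (2*r+1))).filter fun p =>
      ((p.1 % 2 = 1 ∧ p.1 ≤ r + r % 2 ∧ p.2 % 2 = 0 ∧ p.2 ≤ r + r % 2 ∧ p.1 < p.2) ∨
       (p.1 % 2 = 1 ∧ r + r % 2 < p.1 ∧ p.2 % 2 = 0 ∧ r + r % 2 < p.2 ∧ p.1 < p.2))) := by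
    apply Finset.filter_congr
    intro p hp
    simp only [Finset.mem_coe, Finset.mem_product, Finset.mem_Icc] at hp
    unfold ph
    split_ifs <;> omega
  rw [e1]
  have e2 : (((Finset.Icc 1 (2*r+1)) ×ˢ (Finset.Icc 1 (2*r+1))).filter fun p =>
      ((p.1 % 2 = 1 ∧ p.1 ≤ r + r % 2 ∧ p.2 % 2 = 0 ∧ p.2 ≤ r + r % 2 ∧ p.1 < p.2) ∨
       (p.1 % 2 = 1 ∧ r + r % 2 < p.1 ∧ p.2 % 2 = 0 ∧ r + r % 2 < p.2 ∧ p.1 < p.2))).card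
      = (Finset.Icc 1 ((r+1)/2) ×ˢ Finset.Icc 1 (r/2+1)).card := by
    apply Finset.card_nbij'
      (fun p => if p.1 ≤ r + r % 2 then (p.2/2, (p.1+1)/2)
                else ((2*r+2-p.2)/2, (2*r+3-p.1)/2))
      (fun q => if q.2 ≤ q.1 then (2*q.2-1, 2*q.1) else (2*r+3-2*q.2, 2*r+2-2*q.1))
    · intro p hp
      simp only [Finset.mem_coe, Finset.mem_filter, Finset.mem_product, Finset.mem_Icc] at hp
      dsimp only
      split_ifs <;> simp only [Finset.mem_coe, Finset.mem_product, Finset.mem_Icc] <;> omega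
    · intro q hq
      simp only [Finset.mem_coe, Finset.mem_product, Finset.mem_Icc] at hq
      dsimp only
      split_ifs <;>
        simp only [Finset.mem_coe, Finset.mem_filter, Finset.mem_product, Finset.mem_Icc] <;> omega
    · intro p hp
      simp only [Finset.mem_coe, Finset.mem_filter, Finset.mem_product, Finset.mem_Icc] at hp
      dsimp only
      split_ifs <;> (rw [Prod.ext_iff] <;> dsimp only at * <;> omega)
    · intro q hq
      simp only [Finset.mem_coe, Finset.mem_product, Finset.mem_Icc] at hq
      dsimp only
      split_ifs <;> (rw [Prod.ext_iff] <;> dsimp only at * <;> omega)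
  rw [e2, Finset.card_product, Nat.card_Icc, Nat.card_Icc, alga]
  simp

open Finset

lemma bij_c1_d1 (r : ℕ) (hr : 1 ≤ r) :
    (((Finset.Icc 1 (2*r+1)) ×ˢ (Finset.Icc 1 (2*r+1))).filter fun p => (p.1 % 2 = 0 ∧ p.2 % 2 = 1 ∧ p.2 ≤ r + r % 2 ∧ p.1 < p.2)).card = (((Finset.Icc 1 (2*r+1)) ×ˢ (Finset.Icc 1 (2*r+1))).filter fun p => (p.1 % 2 = 0 ∧ p.2 % 2 = 0 ∧ p.2 ≤ r + r % 2 ∧ p.1 < p.2)).card := by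
    apply Finset.card_nbij' (fun p => (p.1, p.2+1)) (fun p => (p.1, p.2-1))
    · intro p hp
      simp only [Finset.mem_coe, Finset.mem_filter, Finset.mem_product, Finset.mem_Icc] at hp
      simp only [Finset.mem_coe, Finset.mem_filter, Finset.mem_product, Finset.mem_Icc]
      omega
    · intro p hp
      simp only [Finset.mem_coe, Finset.mem_filter, Finset.mem_product, Finset.mem_Icc] at hp
      simp only [Finset.mem_coe, Finset.mem_filter, Finset.mem_product, Finset.mem_Icc]
      omega
    · intro p hp
      simp only [Finset.mem_coe, Finset.mem_filter, Finset.mem_product, Finset.mem_Icc] at hp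
      rw [Prod.ext_iff]
      dsimp only
      omega
    · intro p hp
      simp only [Finset.mem_coe, Finset.mem_filter, Finset.mem_product, Finset.mem_Icc] at hp
      rw [Prod.ext_iff]
      dsimp only
      omega

lemma bij_c2_d3 (r : ℕ) (hr : 1 ≤ r) :
    (((Finset.Icc 1 (2*r+1)) ×ˢ (Finset.Icc 1 (2*r+1))).filter fun p => (p.1 % 2 = 0 ∧ p.1 ≤ r + r % 2 ∧ p.2 % 2 = 0 ∧ r + r % 2 < p.2)).card = (((Finset.Icc 1 (2*r+1)) ×ˢ (Finset.Icc 1 (2*r+1))).filter fun p => (p.1 % 2 = 1 ∧ p.1 ≤ r + r % 2 ∧ p.2 % 2 = 0 ∧ r + r % 2 < p.2)).card := by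
    apply Finset.card_nbij' (fun p => (p.1-1, p.2)) (fun p => (p.1+1, p.2))
    · intro p hp
      simp only [Finset.mem_coe, Finset.mem_filter, Finset.mem_product, Finset.mem_Icc] at hp
      simp only [Finset.mem_coe, Finset.mem_filter, Finset.mem_product, Finset.mem_Icc]
      omega
    · intro p hp
      simp only [Finset.mem_coe, Finset.mem_filter, Finset.mem_product, Finset.mem_Icc] at hp
      simp only [Finset.mem_coe, Finset.mem_filter, Finset.mem_product, Finset.mem_Icc]
      omega
    · intro p hp
      simp only [Finset.mem_coe, Finset.mem_filter, Finset.mem_product, Finset.mem_Icc] at hp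
      rw [Prod.ext_iff]
      dsimp only
      omega
    · intro p hp
      simp only [Finset.mem_coe, Finset.mem_filter, Finset.mem_product, Finset.mem_Icc] at hp
      rw [Prod.ext_iff]
      dsimp only
      omega

lemma bij_c4_d5 (r : ℕ) (hr : 1 ≤ r) :
    (((Finset.Icc 1 (2*r+1)) ×ˢ (Finset.Icc 1 (2*r+1))).filter fun p => (p.1 % 2 = 0 ∧ r + r % 2 < p.1 ∧ p.2 % 2 = 1 ∧ p.1 < p.2)).card = (((Finset.Icc 1 (2*r+1)) ×ˢ (Finset.Icc 1 (2*r+1))).filter fun p => (p.1 % 2 = 1 ∧ r + r % 2 < p.1 ∧ p.2 % 2 = 1 ∧ p.1 < p.2)).card := by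
    apply Finset.card_nbij' (fun p => (p.1-1, p.2)) (fun p => (p.1+1, p.2))
    · intro p hp
      simp only [Finset.mem_coe, Finset.mem_filter, Finset.mem_product, Finset.mem_Icc] at hp
      simp only [Finset.mem_coe, Finset.mem_filter, Finset.mem_product, Finset.mem_Icc]
      omega
    · intro p hp
      simp only [Finset.mem_coe, Finset.mem_filter, Finset.mem_product, Finset.mem_Icc] at hp
      simp only [Finset.mem_coe, Finset.mem_filter, Finset.mem_product, Finset.mem_Icc]
      omega
    · intro p hp
      simp only [Finset.mem_coe, Finset.mem_filter, Finset.mem_product, Finset.mem_Icc] at hp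
      rw [Prod.ext_iff]
      dsimp only
      omega
    · intro p hp
      simp only [Finset.mem_coe, Finset.mem_filter, Finset.mem_product, Finset.mem_Icc] at hp
      rw [Prod.ext_iff]
      dsimp only
      omega

lemma card_c5 (r : ℕ) (hr : 1 ≤ r) :
    (((Finset.Icc 1 (2*r+1)) ×ˢ (Finset.Icc 1 (2*r+1))).filter fun p => (p.1 = p.2 + 1 ∧ p.2 % 2 = 1 ∧ p.1 ≤ 2*r)).card = r := by
  have h : (((Finset.Icc 1 (2*r+1)) ×ˢ (Finset.Icc 1 (2*r+1))).filter fun p => (p.1 = p.2 + 1 ∧ p.2 % 2 = 1 ∧ p.1 ≤ 2*r)).card = (Finset.Icc 1 r).card := by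
    apply Finset.card_nbij' (fun p => p.1/2) (fun t => (2*t, 2*t-1))
    · intro p hp
      simp only [Finset.mem_coe, Finset.mem_filter, Finset.mem_product, Finset.mem_Icc] at hp
      simp only [Finset.mem_coe, Finset.mem_Icc]
      omega
    · intro t ht
      simp only [Finset.mem_coe, Finset.mem_Icc] at ht
      simp only [Finset.mem_coe, Finset.mem_filter, Finset.mem_product, Finset.mem_Icc]
      omega
    · intro p hp
      simp only [Finset.mem_coe, Finset.mem_filter, Finset.mem_product, Finset.mem_Icc] at hp
      rw [Prod.ext_iff]
      dsimp only
      omega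
    · intro t ht
      simp only [Finset.mem_coe, Finset.mem_Icc] at ht
      dsimp only
      omega
  rw [h, Nat.card_Icc]
  omega

lemma card_d0 (r : ℕ) (hr : 1 ≤ r) :
    (((Finset.Icc 1 (2*r+1)) ×ˢ (Finset.Icc 1 (2*r+1))).filter fun p => (p.1 = p.2)).card = 2*r+1 := by
  have h : (((Finset.Icc 1 (2*r+1)) ×ˢ (Finset.Icc 1 (2*r+1))).filter fun p => (p.1 = p.2)).card = (Finset.Icc 1 (2*r+1)).card := by
    apply Finset.card_nbij' (fun p => p.1) (fun x => (x, x))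
    · intro p hp
      simp only [Finset.mem_coe, Finset.mem_filter, Finset.mem_product, Finset.mem_Icc] at hp
      simp only [Finset.mem_coe, Finset.mem_Icc]
      omega
    · intro x hx
      simp only [Finset.mem_coe, Finset.mem_Icc] at hx
      simp only [Finset.mem_coe, Finset.mem_filter, Finset.mem_product, Finset.mem_Icc]
      refine ⟨⟨⟨hx.1, hx.2⟩, hx.1, hx.2⟩, trivial⟩
    · intro p hp
      obtain ⟨x, y⟩ := p
      simp only [Finset.mem_coe, Finset.mem_filter, Finset.mem_product, Finset.mem_Icc] at hp
      have hxy : x = y := hp.2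
      subst hxy
      rfl
    · intro x _
      rfl
  rw [h, Nat.card_Icc]
  omega

lemma card_c3 (r : ℕ) (hr : 1 ≤ r) :
    (((Finset.Icc 1 (2*r+1)) ×ˢ (Finset.Icc 1 (2*r+1))).filter fun p => (p.1 % 2 = 1 ∧ p.1 ≤ r + r % 2 ∧ p.2 % 2 = 1 ∧ r + r % 2 < p.2)).card = alga r := by
  have h : (((Finset.Icc 1 (2*r+1)) ×ˢ (Finset.Icc 1 (2*r+1))).filter fun p => (p.1 % 2 = 1 ∧ p.1 ≤ r + r % 2 ∧ p.2 % 2 = 1 ∧ r + r % 2 < p.2)).card = (Finset.Icc 1 ((r+1)/2) ×ˢ Finset.Icc 1 (r/2+1)).card := by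
    apply Finset.card_nbij' (fun p => ((p.1+1)/2, (2*r+3-p.2)/2)) (fun q => (2*q.1-1, 2*r+3-2*q.2))
    · intro p hp
      simp only [Finset.mem_coe, Finset.mem_filter, Finset.mem_product, Finset.mem_Icc] at hp
      simp only [Finset.mem_coe, Finset.mem_filter, Finset.mem_product, Finset.mem_Icc]
      omega
    · intro p hp
      simp only [Finset.mem_coe, Finset.mem_filter, Finset.mem_product, Finset.mem_Icc] at hp
      simp only [Finset.mem_coe, Finset.mem_filter, Finset.mem_product, Finset.mem_Icc]
      omega
    · intro p hp
      simp only [Finset.mem_coe, Finset.mem_filter, Finset.mem_product, Finset.mem_Icc] at hp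
      rw [Prod.ext_iff]
      dsimp only
      omega
    · intro p hp
      simp only [Finset.mem_coe, Finset.mem_filter, Finset.mem_product, Finset.mem_Icc] at hp
      rw [Prod.ext_iff]
      dsimp only
      omega
  rw [h, Finset.card_product, Nat.card_Icc, Nat.card_Icc, alga]
  simp

lemma card_d2 (r : ℕ) (hr : 1 ≤ r) :
    (((Finset.Icc 1 (2*r+1)) ×ˢ (Finset.Icc 1 (2*r+1))).filter fun p => (p.1 % 2 = 1 ∧ p.1 ≤ r + r % 2 ∧ p.2 % 2 = 1 ∧ p.2 ≤ r + r % 2 ∧ p.1 < p.2)).card = (triF ((r+1)/2)).card := by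
  have h : (((Finset.Icc 1 (2*r+1)) ×ˢ (Finset.Icc 1 (2*r+1))).filter fun p => (p.1 % 2 = 1 ∧ p.1 ≤ r + r % 2 ∧ p.2 % 2 = 1 ∧ p.2 ≤ r + r % 2 ∧ p.1 < p.2)).card = (triF ((r+1)/2)).card := by
    apply Finset.card_nbij' (fun p => ((p.1+1)/2, (p.2+1)/2)) (fun q => (2*q.1-1, 2*q.2-1))
    · intro p hp
      simp only [Finset.mem_coe, Finset.mem_filter, Finset.mem_product, Finset.mem_Icc] at hp
      simp only [Finset.mem_coe, triF, Finset.mem_filter, Finset.mem_product, Finset.mem_Icc]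
      omega
    · intro p hp
      simp only [Finset.mem_coe, triF, Finset.mem_filter, Finset.mem_product, Finset.mem_Icc] at hp
      simp only [Finset.mem_coe, Finset.mem_filter, Finset.mem_product, Finset.mem_Icc]
      omega
    · intro p hp
      simp only [Finset.mem_coe, Finset.mem_filter, Finset.mem_product, Finset.mem_Icc] at hp
      rw [Prod.ext_iff]
      dsimp only
      omega
    · intro p hp
      simp only [Finset.mem_coe, triF, Finset.mem_filter, Finset.mem_product, Finset.mem_Icc] at hp
      rw [Prod.ext_iff]
      dsimp only
      omega
  exact h

lemma card_d4 (r : ℕ) (hr : 1 ≤ r) :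
    (((Finset.Icc 1 (2*r+1)) ×ˢ (Finset.Icc 1 (2*r+1))).filter fun p => (p.1 % 2 = 0 ∧ r + r % 2 < p.1 ∧ p.2 % 2 = 0 ∧ p.1 < p.2)).card = (triF (r/2)).card := by
  have h : (((Finset.Icc 1 (2*r+1)) ×ˢ (Finset.Icc 1 (2*r+1))).filter fun p => (p.1 % 2 = 0 ∧ r + r % 2 < p.1 ∧ p.2 % 2 = 0 ∧ p.1 < p.2)).card = (triF (r/2)).card := by
    apply Finset.card_nbij' (fun p => ((2*r+2-p.2)/2, (2*r+2-p.1)/2))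
      (fun q => (2*r+2-2*q.2, 2*r+2-2*q.1))
    · intro p hp
      simp only [Finset.mem_coe, Finset.mem_filter, Finset.mem_product, Finset.mem_Icc] at hp
      simp only [Finset.mem_coe, triF, Finset.mem_filter, Finset.mem_product, Finset.mem_Icc]
      omega
    · intro p hp
      simp only [Finset.mem_coe, triF, Finset.mem_filter, Finset.mem_product, Finset.mem_Icc] at hp
      simp only [Finset.mem_coe, Finset.mem_filter, Finset.mem_product, Finset.mem_Icc]
      omega
    · intro p hp
      simp only [Finset.mem_coe, Finset.mem_filter, Finset.mem_product, Finset.mem_Icc] at hp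
      rw [Prod.ext_iff]
      dsimp only
      omega
    · intro p hp
      simp only [Finset.mem_coe, triF, Finset.mem_filter, Finset.mem_product, Finset.mem_Icc] at hp
      rw [Prod.ext_iff]
      dsimp only
      omega
  exact h

lemma cardW1_split (r : ℕ) (hr : 1 ≤ r) :
    (((Finset.Icc 1 (2*r+1)) ×ˢ (Finset.Icc 1 (2*r+1))).filter fun p => ((p.1 ≤ p.2 ∨ (p.1 = p.2+1 ∧ p.2 % 2 = 1 ∧ p.1 ≤ 2*r)) ∧ (1:ℤ) = ph r p.2 - ph r p.1)).card =
      (((Finset.Icc 1 (2*r+1)) ×ˢ (Finset.Icc 1 (2*r+1))).filter fun p => (p.1 % 2 = 0 ∧ p.2 % 2 = 1 ∧ p.2 ≤ r + r % 2 ∧ p.1 < p.2)).card + ((((Finset.Icc 1 (2*r+1)) ×ˢ (Finset.Icc 1 (2*r+1))).filter fun p => (p.1 % 2 = 0 ∧ p.1 ≤ r + r % 2 ∧ p.2 % 2 = 0 ∧ r + r % 2 < p.2)).card + ((((Finset.Icc 1 (2*r+1)) ×ˢ (Finset.Icc 1 (2*r+1))).filter fun p => (p.1 % 2 = 1 ∧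 p.1 ≤ r + r % 2 ∧ p.2 % 2 = 1 ∧ r + r % 2 < p.2)).card +
        ((((Finset.Icc 1 (2*r+1)) ×ˢ (Finset.Icc 1 (2*r+1))).filter fun p => (p.1 % 2 = 0 ∧ r + r % 2 < p.1 ∧ p.2 % 2 = 1 ∧ p.1 < p.2)).card + (((Finset.Icc 1 (2*r+1)) ×ˢ (Finset.Icc 1 (2*r+1))).filter fun p => (p.1 = p.2 + 1 ∧ p.2 % 2 = 1 ∧ p.1 ≤ 2*r)).card))) := by
  have e1 : (((Finset.Icc 1 (2*r+1)) ×ˢ (Finset.Icc 1 (2*r+1))).filter fun p => ((p.1 ≤ p.2 ∨ (p.1 = p.2+1 ∧ p.2 % 2 = 1 ∧ p.1 ≤ 2*r)) ∧ (1:ℤ) = ph r p.2 - ph r p.1)) =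
      (((Finset.Icc 1 (2*r+1)) ×ˢ (Finset.Icc 1 (2*r+1))).filter fun p => (p.1 % 2 = 0 ∧ p.2 % 2 = 1 ∧ p.2 ≤ r + r % 2 ∧ p.1 < p.2) ∨ ((p.1 % 2 = 0 ∧ p.1 ≤ r + r % 2 ∧ p.2 % 2 = 0 ∧ r + r % 2 < p.2) ∨ ((p.1 % 2 = 1 ∧ p.1 ≤ r + r % 2 ∧ p.2 % 2 = 1 ∧ r + r % 2 < p.2) ∨ ((p.1 % 2 = 0 ∧ r + r % 2 < p.1 ∧ p.2 % 2 = 1 ∧ p.1 < p.2) ∨ (p.1 = p.2 + 1 ∧ p.2 % 2 = 1 ∧ p.1 ≤ 2*r))))) := by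
    apply Finset.filter_congr
    intro p hp
    simp only [Finset.mem_product, Finset.mem_Icc] at hp
    unfold ph
    split_ifs <;> omega
  rw [e1, card_or (by intro x hx; omega), card_or (by intro x hx; omega),
    card_or (by intro x hx; omega), card_or (by intro x hx; omega)]

lemma cardW0_split (r : ℕ) (hr : 1 ≤ r) :
    (((Finset.Icc 1 (2*r+1)) ×ˢ (Finset.Icc 1 (2*r+1))).filter fun p => ((p.1 ≤ p.2 ∨ (p.1 = p.2+1 ∧ p.2 % 2 = 1 ∧ p.1 ≤ 2*r)) ∧ (0:ℤ) = ph r p.2 - ph r p.1)).card =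
      (((Finset.Icc 1 (2*r+1)) ×ˢ (Finset.Icc 1 (2*r+1))).filter fun p => (p.1 = p.2)).card + ((((Finset.Icc 1 (2*r+1)) ×ˢ (Finset.Icc 1 (2*r+1))).filter fun p => (p.1 % 2 = 0 ∧ p.2 % 2 = 0 ∧ p.2 ≤ r + r % 2 ∧ p.1 < p.2)).card + ((((Finset.Icc 1 (2*r+1)) ×ˢ (Finset.Icc 1 (2*r+1))).filter fun p => (p.1 % 2 = 1 ∧ p.1 ≤ r + r % 2 ∧ p.2 % 2 = 1 ∧ p.2 ≤ r + r % 2 ∧ p.1 < p.2)).card +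
        ((((Finset.Icc 1 (2*r+1)) ×ˢ (Finset.Icc 1 (2*r+1))).filter fun p => (p.1 % 2 = 1 ∧ p.1 ≤ r + r % 2 ∧ p.2 % 2 = 0 ∧ r + r % 2 < p.2)).card + ((((Finset.Icc 1 (2*r+1)) ×ˢ (Finset.Icc 1 (2*r+1))).filter fun p => (p.1 % 2 = 0 ∧ r + r % 2 < p.1 ∧ p.2 % 2 = 0 ∧ p.1 < p.2)).card + (((Finset.Icc 1 (2*r+1)) ×ˢ (Finset.Icc 1 (2*r+1))).filter fun p => (p.1 % 2 = 1 ∧ r + r % 2 < p.1 ∧ p.2 % 2 = 1 ∧ p.1 < p.2)).card)))) := by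
  have e1 : (((Finset.Icc 1 (2*r+1)) ×ˢ (Finset.Icc 1 (2*r+1))).filter fun p => ((p.1 ≤ p.2 ∨ (p.1 = p.2+1 ∧ p.2 % 2 = 1 ∧ p.1 ≤ 2*r)) ∧ (0:ℤ) = ph r p.2 - ph r p.1)) =
      (((Finset.Icc 1 (2*r+1)) ×ˢ (Finset.Icc 1 (2*r+1))).filter fun p => (p.1 = p.2) ∨ ((p.1 % 2 = 0 ∧ p.2 % 2 = 0 ∧ p.2 ≤ r + r % 2 ∧ p.1 < p.2) ∨ ((p.1 % 2 = 1 ∧ p.1 ≤ r + r % 2 ∧ p.2 % 2 = 1 ∧ p.2 ≤ r + r % 2 ∧ p.1 < p.2) ∨ ((p.1 % 2 = 1 ∧ p.1 ≤ r + r % 2 ∧ p.2 % 2 = 0 ∧ r + r % 2 < p.2) ∨ ((p.1 % 2 = 0 ∧ r + r % 2 < p.1 ∧ p.2 % 2 = 0 ∧ p.1 < p.2) ∨ (p.1 % 2 = 1 ∧ r + r % 2 < p.1 ∧ p.2 % 2 = 1 ∧ p.1 < p.2)))))) := by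
    apply Finset.filter_congr
    intro p hp
    simp only [Finset.mem_product, Finset.mem_Icc] at hp
    unfold ph
    split_ifs <;> omega
  rw [e1, card_or (by intro x hx; omega), card_or (by intro x hx; omega),
    card_or (by intro x hx; omega), card_or (by intro x hx; omega),
    card_or (by intro x hx; omega)]

lemma cardW0_eq_W1 (r : ℕ) (hr : 1 ≤ r) :
    (((Finset.Icc 1 (2*r+1)) ×ˢ (Finset.Icc 1 (2*r+1))).filter fun p => ((p.1 ≤ p.2 ∨ (p.1 = p.2+1 ∧ p.2 % 2 = 1 ∧ p.1 ≤ 2*r)) ∧ (0:ℤ) = ph r p.2 - ph r p.1)).card = (((Finset.Icc 1 (2*r+1)) ×ˢ (Finset.Icc 1 (2*r+1))).filter fun p => ((p.1 ≤ p.2 ∨ (p.1 = p.2+1 ∧ p.2 % 2 = 1 ∧ p.1 ≤ 2*r)) ∧ (1:ℤ) = ph r p.2 - ph r p.1)).card + 1 := by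
  rw [cardW0_split r hr, cardW1_split r hr, bij_c1_d1 r hr, bij_c2_d3 r hr, bij_c4_d5 r hr,
    card_c5 r hr, card_d0 r hr, card_c3 r hr, card_d2 r hr, card_d4 r hr]
  have := tri_id r hr
  omega

lemma cardW1_lb (r : ℕ) (hr : 1 ≤ r) :
    alga r + r ≤ (((Finset.Icc 1 (2*r+1)) ×ˢ (Finset.Icc 1 (2*r+1))).filter fun p => ((p.1 ≤ p.2 ∨ (p.1 = p.2+1 ∧ p.2 % 2 = 1 ∧ p.1 ≤ 2*r)) ∧ (1:ℤ) = ph r p.2 - ph r p.1)).card := by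
  rw [cardW1_split r hr, card_c5 r hr, card_c3 r hr]
  omega

lemma cardWother (r : ℕ) (hr : 1 ≤ r) (v : ℤ)
    (h1 : v ≠ -1) (h2 : v ≠ 0) (h3 : v ≠ 1) (h4 : v ≠ 2) :
    (((Finset.Icc 1 (2*r+1)) ×ˢ (Finset.Icc 1 (2*r+1))).filter fun p => ((p.1 ≤ p.2 ∨ (p.1 = p.2+1 ∧ p.2 % 2 = 1 ∧ p.1 ≤ 2*r)) ∧ (v:ℤ) = ph r p.2 - ph r p.1)).card = 0 := by
  rw [Finset.card_eq_zero, Finset.filter_eq_empty_iff]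
  intro p hp
  simp only [Finset.mem_product, Finset.mem_Icc] at hp
  unfold ph
  split_ifs <;> omega

end AuxAll

/-- For `r ≥ 1` and `g_r = p^A(2|…|2|1 / 2r+1)` (with `r` parts equal to `2`), there are
positive integers `a_r > b_r` such that the spectrum of `g_r` is
`{-1^{b_r}, 0^{a_r}, 1^{a_r}, 2^{b_r}}`; in particular `g_r` has the log-concave
spectrum property. -/
theorem statement19 (r : ℕ) (hr : 1 ≤ r) :
    (∃ ar br : ℕ, 0 < br ∧ br < ar ∧
      spectrum (List.replicate r 2 ++ [1]) [2 * r + 1]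
        = Multiset.replicate br (-1 : ℤ) + Multiset.replicate ar (0 : ℤ) +
            Multiset.replicate ar (1 : ℤ) + Multiset.replicate br (2 : ℤ)) ∧
    HasLogConcaveSpectrum (spectrum (List.replicate r 2 ++ [1]) [2 * r + 1]) := by
  have hcount := count_S0 r hr
  set ar := (((Finset.Icc 1 (2*r+1)) ×ˢ (Finset.Icc 1 (2*r+1))).filter fun p =>
      ((p.1 ≤ p.2 ∨ (p.1 = p.2+1 ∧ p.2 % 2 = 1 ∧ p.1 ≤ 2*r)) ∧
        (1:ℤ) = ph r p.2 - ph r p.1)).card with har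
  have h1 : Multiset.count 1 (spectrumBlock (List.replicate r 2 ++ [1]) [2*r+1]
      (Finset.Icc 1 ((List.replicate r 2 ++ [1]).sum))
      (Finset.Icc 1 ((List.replicate r 2 ++ [1]).sum))) = ar := hcount 1
  have h0 : Multiset.count 0 (spectrumBlock (List.replicate r 2 ++ [1]) [2*r+1]
      (Finset.Icc 1 ((List.replicate r 2 ++ [1]).sum))
      (Finset.Icc 1 ((List.replicate r 2 ++ [1]).sum))) = ar + 1 := by
    rw [hcount 0, cardW0_eq_W1 r hr]
  have h2 : Multiset.count 2 (spectrumBlock (List.replicate r 2 ++ [1]) [2*r+1]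
      (Finset.Icc 1 ((List.replicate r 2 ++ [1]).sum))
      (Finset.Icc 1 ((List.replicate r 2 ++ [1]).sum))) = alga r := by
    rw [hcount 2, cardV2 r hr]
  have hm1 : Multiset.count (-1) (spectrumBlock (List.replicate r 2 ++ [1]) [2*r+1]
      (Finset.Icc 1 ((List.replicate r 2 ++ [1]).sum))
      (Finset.Icc 1 ((List.replicate r 2 ++ [1]).sum))) = alga r := by
    rw [hcount (-1), cardVm1 r hr]
  have hoth : ∀ v : ℤ, v ≠ -1 → v ≠ 0 → v ≠ 1 → v ≠ 2 →
      Multiset.count v (spectrumBlock (List.replicate r 2 ++ [1]) [2*r+1]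
      (Finset.Icc 1 ((List.replicate r 2 ++ [1]).sum))
      (Finset.Icc 1 ((List.replicate r 2 ++ [1]).sum))) = 0 := by
    intro v a b c d
    rw [hcount v, cardWother r hr v a b c d]
  have hbrpos : 0 < alga r := Nat.mul_pos (by omega) (by omega)
  have hbrar : alga r < ar := by
    have := cardW1_lb r hr
    omega
  have hsp : spectrum (List.replicate r 2 ++ [1]) [2 * r + 1]
      = Multiset.replicate (alga r) (-1 : ℤ) + Multiset.replicate ar (0 : ℤ) +
          Multiset.replicate ar (1 : ℤ) + Multiset.replicate (alga r) (2 : ℤ) := by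
    rw [spectrum]
    refine Multiset.ext.mpr fun v => ?_
    rw [Multiset.count_sub]
    simp only [Multiset.count_add, Multiset.count_replicate, Multiset.count_singleton]
    by_cases e1 : v = -1
    · subst e1; rw [hm1]; norm_num
    · by_cases e2 : v = 0
      · subst e2; rw [h0]; norm_num
      · by_cases e3 : v = 1
        · subst e3; rw [h1]; norm_num
        · by_cases e4 : v = 2
          · subst e4; rw [h2]; norm_num
          · rw [hoth v e1 e2 e3 e4, if_neg (by omega : ¬(-1:ℤ) = v),
              if_neg (by omega : ¬(0:ℤ) = v), if_neg (by omega : ¬(1:ℤ) = v),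
              if_neg (by omega : ¬(2:ℤ) = v)]
            simp
  refine ⟨⟨ar, alga r, hbrpos, hbrar, hsp⟩, ?_⟩
  rw [hsp]
  have htf : (Multiset.replicate (alga r) (-1 : ℤ) + Multiset.replicate ar (0 : ℤ) +
      Multiset.replicate ar (1 : ℤ) + Multiset.replicate (alga r) (2 : ℤ)).toFinset
      = ({-1, 0, 1, 2} : Finset ℤ) := by
    ext x
    simp only [Multiset.mem_toFinset, Multiset.mem_add, Multiset.mem_replicate,
      Finset.mem_insert, Finset.mem_singleton]
    constructor
    · rintro (((⟨_, h⟩|⟨_, h⟩)|⟨_, h⟩)|⟨_, h⟩) <;> tauto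
    · intro h
      rcases h with h|h|h|h
      · exact Or.inl (Or.inl (Or.inl ⟨by omega, h⟩))
      · exact Or.inl (Or.inl (Or.inr ⟨by omega, h⟩))
      · exact Or.inl (Or.inr ⟨by omega, h⟩)
      · exact Or.inr ⟨by omega, h⟩
  have hsort : Finset.sort ({-1, 0, 1, 2} : Finset ℤ) (· ≤ ·) = [-1, 0, 1, 2] := by
    have e1 : ({-1, 0, 1, 2} : Finset ℤ) = insert (-1) {0, 1, 2} := rfl
    have e2 : ({0, 1, 2} : Finset ℤ) = insert (0:ℤ) {1, 2} := rfl
    have e3 : ({1, 2} : Finset ℤ) = insert (1:ℤ) {2} := rfl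
    rw [e1, Finset.sort_insert _ (by decide) (by decide), e2,
      Finset.sort_insert _ (by decide) (by decide), e3,
      Finset.sort_insert _ (by decide) (by decide), Finset.sort_singleton]
  have cm1 : Multiset.count (-1:ℤ) (Multiset.replicate (alga r) (-1 : ℤ) +
      Multiset.replicate ar (0 : ℤ) + Multiset.replicate ar (1 : ℤ) +
      Multiset.replicate (alga r) (2 : ℤ)) = alga r := by
    simp [Multiset.count_replicate]
  have c0 : Multiset.count (0:ℤ) (Multiset.replicate (alga r) (-1 : ℤ) +
      Multiset.replicate ar (0 : ℤ) + Multiset.replicate ar (1 : ℤ) +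
      Multiset.replicate (alga r) (2 : ℤ)) = ar := by
    simp [Multiset.count_replicate]
  have c1 : Multiset.count (1:ℤ) (Multiset.replicate (alga r) (-1 : ℤ) +
      Multiset.replicate ar (0 : ℤ) + Multiset.replicate ar (1 : ℤ) +
      Multiset.replicate (alga r) (2 : ℤ)) = ar := by
    simp [Multiset.count_replicate]
  have c2 : Multiset.count (2:ℤ) (Multiset.replicate (alga r) (-1 : ℤ) +
      Multiset.replicate ar (0 : ℤ) + Multiset.replicate ar (1 : ℤ) +
      Multiset.replicate (alga r) (2 : ℤ)) = alga r := by
    simp [Multiset.count_replicate]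
  intro i hi hlen
  rw [htf, hsort] at hlen ⊢
  have hi12 : i = 1 ∨ i = 2 := by
    have hl4 : ([-1,0,1,2] : List ℤ).length = 4 := rfl
    rw [hl4] at hlen
    omega
  rcases hi12 with h | h <;> subst h
  · have g0 : ([-1,0,1,2] : List ℤ).getD (1-1) 0 = -1 := rfl
    have g1 : ([-1,0,1,2] : List ℤ).getD 1 0 = 0 := rfl
    have g2 : ([-1,0,1,2] : List ℤ).getD (1+1) 0 = 1 := rfl
    rw [g0, g1, g2, cm1, c0, c1, sq]
    exact Nat.mul_le_mul_right ar (le_of_lt hbrar)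
  · have g1 : ([-1,0,1,2] : List ℤ).getD (2-1) 0 = 0 := rfl
    have g2 : ([-1,0,1,2] : List ℤ).getD 2 0 = 1 := rfl
    have g3 : ([-1,0,1,2] : List ℤ).getD (2+1) 0 = 2 := rfl
    rw [g1, g2, g3, c0, c1, c2, sq]
    exact Nat.mul_le_mul_left ar (le_of_lt hbrar)


end Seaweed
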